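/- Let λ be a measure on (0,∞) with ∫₀^∞ (z ∨ z^{1+2/d}) λ(dz) < ∞, let f : (0,∞) → (0,∞) be nondecreasing, and let (t_n) be a nondecreasing sequence with increments Δt_n = t_n - t_{n-1} (t_0 = 0). Then the series ∑_{n≥1} ∫₀^∞ ((z/f(t_n))^{2/d} ∧ Δt_n) · (z/f(t_n)) λ(dz) converges if and only if ∑_{n≥1} (f(t_n)^{-2/d} ∧ Δt_n)/f(t_n) < ∞, provided λ is not the zero measure. -/

import Mathlib

open MeasureTheory Filter ENNReal

lemma key_ineq (p : ℝ) {z a δ : ℝ} (hz : 0 < z) (ha : 0 < a) (hδ : 0 ≤ δ) :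
    min z (z ^ (1 + p)) * (min (a ^ (-p)) δ / a) ≤ min ((z / a) ^ p) δ * (z / a) ∧
    min ((z / a) ^ p) δ * (z / a) ≤ max z (z ^ (1 + p)) * (min (a ^ (-p)) δ / a) := by
  have hx : (z / a) ^ p = z ^ p * a ^ (-p) := by
    rw [Real.div_rpow hz.le ha.le, Real.rpow_neg ha.le, div_eq_mul_inv]
  have h1p : z ^ (1 + p) = z * z ^ p := by
    rw [Real.rpow_add hz, Real.rpow_one]
  set x := z ^ p with hxdef
  set c := a ^ (-p) with hcdef
  have hxpos : 0 < x := Real.rpow_pos_of_pos hz p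
  have hcpos : 0 < c := Real.rpow_pos_of_pos ha (-p)
  have hm0 : 0 ≤ min c δ := le_min hcpos.le hδ
  have core_lo : min 1 x * min c δ ≤ min (x * c) δ := by
    apply le_min
    · exact mul_le_mul (min_le_right _ _) (min_le_left _ _) hm0 hxpos.le
    · calc min 1 x * min c δ ≤ 1 * δ :=
            mul_le_mul (min_le_left _ _) (min_le_right _ _) hm0 zero_le_one
        _ = δ := one_mul δ
  have core_hi : min (x * c) δ ≤ max 1 x * min c δ := by
    rcases le_total c δ with h | h
    · rw [min_eq_left h]
      calc min (x * c) δ ≤ x * c := min_le_left _ _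
        _ ≤ max 1 x * c := mul_le_mul_of_nonneg_right (le_max_right _ _) hcpos.le
    · rw [min_eq_right h]
      calc min (x * c) δ ≤ δ := min_le_right _ _
        _ = 1 * δ := (one_mul δ).symm
        _ ≤ max 1 x * δ := mul_le_mul_of_nonneg_right (le_max_left _ _) hδ
  have hzmin : min z (z ^ (1 + p)) = z * min 1 x := by
    rw [h1p, mul_min_of_nonneg _ _ hz.le, mul_one]
  have hzmax : max z (z ^ (1 + p)) = z * max 1 x := by
    rw [h1p, mul_max_of_nonneg _ _ hz.le, mul_one]
  have hza : 0 ≤ z / a := div_nonneg hz.le ha.le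
  constructor
  · rw [hzmin, hx]
    calc z * min 1 x * (min c δ / a) = (min 1 x * min c δ) * (z / a) := by ring
      _ ≤ min (x * c) δ * (z / a) := mul_le_mul_of_nonneg_right core_lo hza
  · rw [hzmax, hx]
    calc min (x * c) δ * (z / a) ≤ (max 1 x * min c δ) * (z / a) :=
          mul_le_mul_of_nonneg_right core_hi hza
      _ = z * max 1 x * (min c δ / a) := by ring

theorem series_condition_iff (d : ℕ) (hd : 0 < d) (lam : Measure ℝ)
    (hne : lam ≠ 0) (hsupp : lam (Set.Iic 0) = 0)
    (hmom : ∫⁻ z in Set.Ioi (0 : ℝ),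
        ENNReal.ofReal (max z (z ^ (1 + 2 / (d : ℝ)))) ∂lam ≠ ⊤)
    (f : ℝ → ℝ) (hf : Monotone f) (hfpos : ∀ x, 0 < f x)
    (t : ℕ → ℝ) (ht : Monotone t) (ht0 : t 0 = 0)
    (htinf : Tendsto t atTop atTop) :
    (∑' n : ℕ, ∫⁻ z in Set.Ioi (0 : ℝ),
        ENNReal.ofReal
          (min ((z / f (t (n + 1))) ^ (2 / (d : ℝ))) (t (n + 1) - t n)
            * (z / f (t (n + 1)))) ∂lam) ≠ ⊤
      ↔ (∑' n : ℕ,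
          ENNReal.ofReal
            (min ((f (t (n + 1))) ^ (-(2 : ℝ) / (d : ℝ))) (t (n + 1) - t n)
              / f (t (n + 1)))) ≠ ⊤ := by
  have hneg : -(2 : ℝ) / (d : ℝ) = -(2 / (d : ℝ)) := by ring
  rw [hneg] at *
  set p : ℝ := 2 / (d : ℝ) with hp
  set C1 : ℝ≥0∞ :=
    ∫⁻ z in Set.Ioi (0 : ℝ), ENNReal.ofReal (max z (z ^ (1 + p))) ∂lam with hC1
  set C0 : ℝ≥0∞ :=
    ∫⁻ z in Set.Ioi (0 : ℝ), ENNReal.ofReal (min z (z ^ (1 + p))) ∂lam with hC0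
  set S : ℕ → ℝ≥0∞ := fun n =>
    ENNReal.ofReal (min (f (t (n + 1)) ^ (-p)) (t (n + 1) - t n) / f (t (n + 1))) with hS
  set T : ℕ → ℝ≥0∞ := fun n =>
    ∫⁻ z in Set.Ioi (0 : ℝ),
      ENNReal.ofReal
        (min ((z / f (t (n + 1))) ^ p) (t (n + 1) - t n) * (z / f (t (n + 1)))) ∂lam with hT
  have hp0 : (0:ℝ) ≤ 1 + p := by positivity
  -- measurability
  have hmeas_min : Measurable fun z : ℝ => ENNReal.ofReal (min z (z ^ (1 + p))) :=
    ENNReal.measurable_ofReal.comp (measurable_id.min (Real.continuous_rpow_const hp0).measurable)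
  have hmeas_max : Measurable fun z : ℝ => ENNReal.ofReal (max z (z ^ (1 + p))) :=
    ENNReal.measurable_ofReal.comp (measurable_id.max (Real.continuous_rpow_const hp0).measurable)
  -- positivity of lam on Ioi 0
  have hlampos : 0 < lam (Set.Ioi 0) := by
    rcases eq_or_ne (lam (Set.Ioi 0)) 0 with h0 | h0
    · exfalso
      apply hne
      have huniv : lam Set.univ = 0 := by
        have hcover : (Set.univ : Set ℝ) = Set.Iic 0 ∪ Set.Ioi 0 := (Set.Iic_union_Ioi).symm
        refine le_antisymm ?_ zero_le
        rw [hcover]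
        calc lam (Set.Iic 0 ∪ Set.Ioi 0) ≤ lam (Set.Iic 0) + lam (Set.Ioi 0) :=
              measure_union_le _ _
          _ = 0 := by rw [hsupp, h0, add_zero]
      exact Measure.measure_univ_eq_zero.mp huniv
    · exact h0.bot_lt
  have hC0pos : 0 < C0 := by
    rw [hC0, lintegral_pos_iff_support hmeas_min]
    have hsub : Set.Ioi (0 : ℝ) ⊆
        Function.support fun z : ℝ => ENNReal.ofReal (min z (z ^ (1 + p))) := by
      intro z hz
      have hz' : (0 : ℝ) < z := hz
      have : 0 < min z (z ^ (1 + p)) := lt_min hz' (Real.rpow_pos_of_pos hz' _)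
      simp only [Function.mem_support, ne_eq, ENNReal.ofReal_eq_zero, not_le]
      exact this
    calc (0 : ℝ≥0∞) < lam (Set.Ioi 0) := hlampos
      _ = lam.restrict (Set.Ioi 0) (Set.Ioi 0) := (Measure.restrict_apply_self _ _).symm
      _ ≤ _ := measure_mono hsub
  have hC1ne : C1 ≠ ⊤ := hmom
  -- pointwise bounds : for each n
  have hδ : ∀ n : ℕ, 0 ≤ t (n + 1) - t n := fun n => sub_nonneg.2 (ht (Nat.le_succ n))
  have hlow : ∀ n, C0 * S n ≤ T n := by
    intro n
    have hconst : ∫⁻ z in Set.Ioi (0 : ℝ),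
        (fun z : ℝ => ENNReal.ofReal (min z (z ^ (1 + p)))) z * S n ∂lam = C0 * S n :=
      lintegral_mul_const _ hmeas_min
    rw [← hconst, hT]
    apply lintegral_mono_ae
    rw [ae_restrict_iff' measurableSet_Ioi]
    filter_upwards with z hz
    have h := (key_ineq p hz (hfpos (t (n + 1))) (hδ n)).1
    calc ENNReal.ofReal (min z (z ^ (1 + p))) * S n
        = ENNReal.ofReal (min z (z ^ (1 + p)) *
            (min (f (t (n + 1)) ^ (-p)) (t (n + 1) - t n) / f (t (n + 1)))) := by
          rw [ENNReal.ofReal_mul (le_min hz.le (Real.rpow_pos_of_pos hz _).le)]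
      _ ≤ _ := ENNReal.ofReal_le_ofReal h
  have hhigh : ∀ n, T n ≤ C1 * S n := by
    intro n
    have hconst : ∫⁻ z in Set.Ioi (0 : ℝ),
        (fun z : ℝ => ENNReal.ofReal (max z (z ^ (1 + p)))) z * S n ∂lam = C1 * S n :=
      lintegral_mul_const _ hmeas_max
    rw [← hconst, hT]
    apply lintegral_mono_ae
    rw [ae_restrict_iff' measurableSet_Ioi]
    filter_upwards with z hz
    have h := (key_ineq p hz (hfpos (t (n + 1))) (hδ n)).2
    calc ENNReal.ofReal
          (min ((z / f (t (n + 1))) ^ p) (t (n + 1) - t n) * (z / f (t (n + 1))))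
        ≤ ENNReal.ofReal (max z (z ^ (1 + p)) *
            (min (f (t (n + 1)) ^ (-p)) (t (n + 1) - t n) / f (t (n + 1)))) :=
          ENNReal.ofReal_le_ofReal h
      _ = ENNReal.ofReal (max z (z ^ (1 + p))) * S n := by
          rw [ENNReal.ofReal_mul (le_max_of_le_left hz.le)]
  have hsumlow : C0 * ∑' n, S n ≤ ∑' n, T n := by
    rw [← ENNReal.tsum_mul_left]
    exact ENNReal.tsum_le_tsum hlow
  have hsumhigh : ∑' n, T n ≤ C1 * ∑' n, S n := by
    rw [← ENNReal.tsum_mul_left]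
    exact ENNReal.tsum_le_tsum hhigh
  constructor
  · intro h
    intro hStop
    rw [hStop, ENNReal.mul_top hC0pos.ne'] at hsumlow
    exact h (top_le_iff.mp hsumlow)
  · intro h
    exact ne_top_of_le_ne_top (ENNReal.mul_ne_top hC1ne h) hsumhigh
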